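/- KKT sufficiency: suppose X ∈ S^n_+ ∩ P, s ∈ Q, A(X) = b, B(X) = s, and there exist y, ȳ, S, Z, v with A*(y) + B*(ȳ) + S + Z = C, ȳ = v, S ∈ S^n_+, ⟨S, X⟩ = 0, X = Π_P(X - Z), and s = Π_Q(s - v). Then X is optimal for (P) and (y, ȳ, S, Z, v) is optimal for (D), and the optimal values coincide: ⟨C, X⟩ = ⟨b, y⟩ - δ*_P(-Z) - δ*_Q(-v). -/

import Mathlib

open scoped BigOperators

/-- Trace inner product on matrices. -/
noncomputable def mip {n : ℕ} (X Y : Matrix (Fin n) (Fin n) ℝ) : ℝ :=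
  Matrix.trace (X * Y)

/-- Support function of a set of matrices, valued in `EReal`. -/
noncomputable def suppFn {n : ℕ} (P : Set (Matrix (Fin n) (Fin n) ℝ))
    (W : Matrix (Fin n) (Fin n) ℝ) : EReal :=
  sSup ((fun M => ((mip W M : ℝ) : EReal)) '' P)

/-- Support function of a set of vectors, valued in `EReal`. -/
noncomputable def suppFnVec {p : ℕ} (Q : Set (Fin p → ℝ)) (w : Fin p → ℝ) : EReal :=
  sSup ((fun q => ((∑ i, w i * q i : ℝ) : EReal)) '' Q)

lemma mip_comm {n : ℕ} (A B : Matrix (Fin n) (Fin n) ℝ) : mip A B = mip B A :=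
  Matrix.trace_mul_comm A B

lemma mip_add_left {n : ℕ} (A B X : Matrix (Fin n) (Fin n) ℝ) :
    mip (A + B) X = mip A X + mip B X := by simp [mip, Matrix.add_mul]

lemma mip_add_right {n : ℕ} (A B X : Matrix (Fin n) (Fin n) ℝ) :
    mip X (A + B) = mip X A + mip X B := by simp [mip, Matrix.mul_add]

lemma mip_neg_left {n : ℕ} (A X : Matrix (Fin n) (Fin n) ℝ) :
    mip (-A) X = -mip A X := by simp [mip, Matrix.neg_mul]

lemma mip_smul_left {n : ℕ} (t : ℝ) (A X : Matrix (Fin n) (Fin n) ℝ) :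
    mip (t • A) X = t * mip A X := by simp [mip, Matrix.smul_mul]

lemma mip_smul_right {n : ℕ} (t : ℝ) (A X : Matrix (Fin n) (Fin n) ℝ) :
    mip X (t • A) = t * mip X A := by simp [mip, Matrix.mul_smul]

lemma mip_sub_right {n : ℕ} (A B X : Matrix (Fin n) (Fin n) ℝ) :
    mip X (A - B) = mip X A - mip X B := by simp [mip, Matrix.mul_sub]

lemma key_scalar {a c : ℝ} (h : ∀ t : ℝ, 0 < t → t ≤ 1 → 2*(t*a) ≤ t^2 * c) : a ≤ 0 := by
  by_contra h'
  push_neg at h'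
  rcases le_or_gt c 0 with hc | hc
  · have := h 1 one_pos le_rfl; nlinarith
  · have ht : 0 < min 1 (a/c) := lt_min one_pos (div_pos h' hc)
    have h1 := h _ ht (min_le_left _ _)
    have h2 : min 1 (a/c) ≤ a / c := min_le_right _ _
    have h3 : min 1 (a/c) * c ≤ a := by
      have := mul_le_mul_of_nonneg_right h2 hc.le
      rwa [div_mul_cancel₀ a hc.ne'] at this
    nlinarith

open Matrix in
lemma trace_transpose_mul_self_nonneg {n k : ℕ} (M : Matrix (Fin k) (Fin n) ℝ) :
    0 ≤ Matrix.trace (Mᴴ * M) := by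
  simp only [Matrix.trace, Matrix.diag, Matrix.mul_apply, Matrix.conjTranspose_apply,
    star_trivial]
  exact Finset.sum_nonneg fun j _ => Finset.sum_nonneg fun i _ => mul_self_nonneg _

open Matrix in
lemma mip_psd_nonneg {n : ℕ} {S X : Matrix (Fin n) (Fin n) ℝ}
    (hS : S.PosSemidef) (hX : X.PosSemidef) : 0 ≤ mip S X := by
  open scoped MatrixOrder Matrix.Norms.L2Operator in
  obtain ⟨R, rfl⟩ := CStarAlgebra.nonneg_iff_eq_star_mul_self.mp hS.nonneg
  open scoped MatrixOrder Matrix.Norms.L2Operator in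
  obtain ⟨T, rfl⟩ := CStarAlgebra.nonneg_iff_eq_star_mul_self.mp hX.nonneg
  simp only [Matrix.star_eq_conjTranspose]
  have h : mip (Rᴴ*R) (Tᴴ*T) = Matrix.trace ((R*Tᴴ)ᴴ * (R*Tᴴ)) := by
    simp only [mip, Matrix.conjTranspose_mul, Matrix.conjTranspose_conjTranspose]
    rw [show Rᴴ*R*(Tᴴ*T) = Rᴴ*(R*Tᴴ)*T by noncomm_ring,
        Matrix.trace_mul_cycle, ← Matrix.mul_assoc]
  rw [h]
  exact trace_transpose_mul_self_nonneg _

/-- KKT sufficiency: if `X ∈ 𝕊ⁿ₊ ∩ P`, `s ∈ Q`, `A X = b`, `B X = s`, and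
`(y, ȳ, S, Z, v)` satisfies `A*(y) + B*(ȳ) + S + Z = C`, `ȳ = v`, `S ⪰ 0`, `⟨S, X⟩ = 0`,
`X = Π_P(X - Z)` and `s = Π_Q(s - v)`, then `X` is optimal for (P), `(y, ȳ, S, Z, v)` is
optimal for (D), and `⟨C, X⟩ = ⟨b, y⟩ - δ*_P(-Z) - δ*_Q(-v)` (stated additively in
`EReal`). -/
theorem stmt17 {n m p : ℕ}
    (A : Matrix (Fin n) (Fin n) ℝ →ₗ[ℝ] (Fin m → ℝ))
    (B : Matrix (Fin n) (Fin n) ℝ →ₗ[ℝ] (Fin p → ℝ))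
    (Astar : (Fin m → ℝ) →ₗ[ℝ] Matrix (Fin n) (Fin n) ℝ)
    (Bstar : (Fin p → ℝ) →ₗ[ℝ] Matrix (Fin n) (Fin n) ℝ)
    (hAadj : ∀ (y : Fin m → ℝ) (X : Matrix (Fin n) (Fin n) ℝ),
      mip (Astar y) X = ∑ i, y i * A X i)
    (hBadj : ∀ (w : Fin p → ℝ) (X : Matrix (Fin n) (Fin n) ℝ),
      mip (Bstar w) X = ∑ i, w i * B X i)
    (P : Set (Matrix (Fin n) (Fin n) ℝ)) (Q : Set (Fin p → ℝ))
    (hPne : P.Nonempty) (hPclosed : IsClosed P) (hPconv : Convex ℝ P)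
    (hQne : Q.Nonempty) (hQclosed : IsClosed Q) (hQconv : Convex ℝ Q)
    (C X S Z : Matrix (Fin n) (Fin n) ℝ) (b : Fin m → ℝ) (y : Fin m → ℝ)
    (s v ybar : Fin p → ℝ)
    (hXpsd : X.PosSemidef) (hXP : X ∈ P) (hsQ : s ∈ Q)
    (hAX : A X = b) (hBX : B X = s)
    (hdual : Astar y + Bstar ybar + S + Z = C) (hyv : ybar = v)
    (hSpsd : S.PosSemidef) (hcomp : mip S X = 0)
    -- `X = Π_P(X - Z)`: `X` is the metric projection of `X - Z` onto `P`
    (hprojP : ∀ W ∈ P, mip ((X - Z) - X) ((X - Z) - X) ≤ mip ((X - Z) - W) ((X - Z) - W))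
    -- `s = Π_Q(s - v)`: `s` is the metric projection of `s - v` onto `Q`
    (hprojQ : ∀ q ∈ Q, (∑ i, ((s - v) - s) i * ((s - v) - s) i)
        ≤ ∑ i, ((s - v) - q) i * ((s - v) - q) i) :
    -- primal optimality of `X`
    (∀ (X' : Matrix (Fin n) (Fin n) ℝ) (s' : Fin p → ℝ),
      X'.PosSemidef → X' ∈ P → s' ∈ Q → A X' = b → B X' = s' → mip C X ≤ mip C X') ∧
    -- dual optimality of `(y, ȳ, S, Z, v)`
    (∀ (y' : Fin m → ℝ) (ybar' v' : Fin p → ℝ) (S' Z' : Matrix (Fin n) (Fin n) ℝ),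
      Astar y' + Bstar ybar' + S' + Z' = C → ybar' = v' → S'.PosSemidef →
      suppFn P (-Z) + suppFnVec Q (-v) + ((-(∑ i, b i * y i) : ℝ) : EReal)
        ≤ suppFn P (-Z') + suppFnVec Q (-v') + ((-(∑ i, b i * y' i) : ℝ) : EReal)) ∧
    -- equality of the optimal values: `⟨C, X⟩ = ⟨b, y⟩ - δ*_P(-Z) - δ*_Q(-v)`
    ((mip C X : ℝ) : EReal) + suppFn P (-Z) + suppFnVec Q (-v)
      = (((∑ i, b i * y i) : ℝ) : EReal) := by
  subst hyv
  -- Variational inequality for P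
  have hZVI : ∀ W ∈ P, mip (-Z) W ≤ mip (-Z) X := by
    intro W hW
    have key : ∀ t : ℝ, 0 < t → t ≤ 1 →
        2*(t*(-mip (-Z) (X - W))) ≤ t^2 * mip (X-W) (X-W) := by
      intro t ht ht1
      have hWt : (1-t) • X + t • W ∈ P := hPconv hXP hW (by linarith) ht.le (by ring)
      have h := hprojP _ hWt
      have e1 : (X - Z) - X = -Z := by abel
      have e2 : (X - Z) - ((1-t) • X + t • W) = -Z + t • (X - W) := by module
      rw [e1, e2] at h
      have expand : mip (-Z + t • (X - W)) (-Z + t • (X - W))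
          = mip (-Z) (-Z) + 2*(t * mip (-Z) (X - W)) + t^2 * mip (X-W) (X-W) := by
        simp only [mip_add_left, mip_add_right, mip_smul_left, mip_smul_right,
          mip_comm (X-W) (-Z)]
        ring
      rw [expand] at h
      linarith
    have h0 := key_scalar key
    have h1 : 0 ≤ mip (-Z) (X - W) := by linarith
    rw [mip_sub_right] at h1
    linarith
  -- Variational inequality for Q
  have hvVI : ∀ q ∈ Q, (∑ i, (-ybar) i * q i) ≤ ∑ i, (-ybar) i * s i := by
    intro q hq
    have key : ∀ t : ℝ, 0 < t → t ≤ 1 →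
        2*(t*(-(∑ i, (-ybar) i * (s - q) i))) ≤ t^2 * (∑ i, (s-q) i * (s-q) i) := by
      intro t ht ht1
      have hqt : (1-t) • s + t • q ∈ Q := hQconv hsQ hq (by linarith) ht.le (by ring)
      have h := hprojQ _ hqt
      have e1 : ∀ i, ((s - ybar) - s) i = -ybar i := by intro i; simp
      have e2 : ∀ i, ((s - ybar) - ((1-t) • s + t • q)) i = -ybar i + t * (s i - q i) := by
        intro i; simp [sub_smul]; ring
      have h1 : (∑ i, (-ybar i) * (-ybar i))
          ≤ ∑ i, (-ybar i + t * (s i - q i)) * (-ybar i + t * (s i - q i)) := by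
        calc (∑ i, (-ybar i) * (-ybar i))
            = ∑ i, ((s - ybar) - s) i * ((s - ybar) - s) i :=
              Finset.sum_congr rfl fun i _ => by rw [e1]
          _ ≤ ∑ i, ((s - ybar) - ((1-t) • s + t • q)) i
                * ((s - ybar) - ((1-t) • s + t • q)) i := h
          _ = _ := Finset.sum_congr rfl fun i _ => by rw [e2]
      have expand : ∑ i, (-ybar i + t * (s i - q i)) * (-ybar i + t * (s i - q i))
          = (∑ i, (-ybar i) * (-ybar i)) + 2*(t * (∑ i, (-ybar) i * (s - q) i))
            + t^2 * (∑ i, (s-q) i * (s-q) i) := by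
        rw [Finset.mul_sum, Finset.mul_sum, mul_comm, Finset.sum_mul,
          ← Finset.sum_add_distrib, ← Finset.sum_add_distrib]
        exact Finset.sum_congr rfl fun i _ => by simp; ring
      rw [expand] at h1
      linarith
    have h0 := key_scalar key
    have h1 : 0 ≤ ∑ i, (-ybar) i * (s - q) i := by linarith
    have h2 : ∑ i, (-ybar) i * (s - q) i
        = (∑ i, (-ybar) i * s i) - ∑ i, (-ybar) i * q i := by
      rw [← Finset.sum_sub_distrib]
      exact Finset.sum_congr rfl fun i _ => by simp; ring
    linarith [h2 ▸ h1]
  -- support function values at the optimum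
  have hsuppP : suppFn P (-Z) = ((mip (-Z) X : ℝ) : EReal) := by
    apply IsGreatest.csSup_eq
    refine ⟨⟨X, hXP, rfl⟩, ?_⟩
    rintro _ ⟨W, hW, rfl⟩
    show ((mip (-Z) W : ℝ) : EReal) ≤ _
    exact_mod_cast hZVI W hW
  have hsuppQ : suppFnVec Q (-ybar) = ((∑ i, (-ybar) i * s i : ℝ) : EReal) := by
    apply IsGreatest.csSup_eq
    refine ⟨⟨s, hsQ, rfl⟩, ?_⟩
    rintro _ ⟨q, hq, rfl⟩
    show ((∑ i, (-ybar) i * q i : ℝ) : EReal) ≤ _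
    exact_mod_cast hvVI q hq
  -- key identity for any dual-feasible point, evaluated at any primal-feasible point
  have hid : ∀ (X₀ : Matrix (Fin n) (Fin n) ℝ) (s₀ : Fin p → ℝ) (y' : Fin m → ℝ)
      (v' : Fin p → ℝ) (S' Z' : Matrix (Fin n) (Fin n) ℝ),
      A X₀ = b → B X₀ = s₀ → Astar y' + Bstar v' + S' + Z' = C →
      mip C X₀ = (∑ i, b i * y' i) + (∑ i, v' i * s₀ i) + mip S' X₀ + mip Z' X₀ := by
    intro X₀ s₀ y' v' S' Z' hA₀ hB₀ hd
    rw [← hd, mip_add_left, mip_add_left, mip_add_left, hAadj, hBadj, hA₀, hB₀]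
    have e : ∑ i, y' i * b i = ∑ i, b i * y' i :=
      Finset.sum_congr rfl fun i _ => mul_comm _ _
    rw [e]
  have hvs : ∀ (w s₀ : Fin p → ℝ), (∑ i, (-w) i * s₀ i) = -∑ i, w i * s₀ i := by
    intro w s₀
    rw [← Finset.sum_neg_distrib]
    exact Finset.sum_congr rfl fun i _ => by simp
  -- the main real identity at the KKT point
  have hreal : mip C X = (∑ i, b i * y i) + (∑ i, ybar i * s i) + mip Z X := by
    have := hid X s y ybar S Z hAX hBX hdual
    linarith
  refine ⟨?_, ?_, ?_⟩
  · -- primal optimality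
    intro X' s' hX'psd hX'P hs'Q hAX' hBX'
    have h2 := hid X' s' y ybar S Z hAX' hBX' hdual
    have hS' : 0 ≤ mip S X' := mip_psd_nonneg hSpsd hX'psd
    have hZ' := hZVI X' hX'P
    rw [mip_neg_left, mip_neg_left] at hZ'
    have hv' := hvVI s' hs'Q
    rw [hvs, hvs] at hv'
    linarith
  · -- dual optimality
    intro y' ybar' v' S' Z' hdual' hyv' hS'psd
    subst hyv'
    rw [hsuppP, hsuppQ]
    have hb1 : ((mip (-Z') X : ℝ) : EReal) ≤ suppFn P (-Z') := le_sSup ⟨X, hXP, rfl⟩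
    have hb2 : ((∑ i, (-ybar') i * s i : ℝ) : EReal) ≤ suppFnVec Q (-ybar') :=
      le_sSup ⟨s, hsQ, rfl⟩
    have hmid : mip (-Z) X + (∑ i, (-ybar) i * s i) + (-(∑ i, b i * y i))
        ≤ mip (-Z') X + (∑ i, (-ybar') i * s i) + (-(∑ i, b i * y' i)) := by
      have h2 := hid X s y' ybar' S' Z' hAX hBX hdual'
      have hS' : 0 ≤ mip S' X := mip_psd_nonneg hS'psd hXpsd
      rw [mip_neg_left, mip_neg_left, hvs, hvs]
      linarith
    calc ((mip (-Z) X : ℝ) : EReal) + ((∑ i, (-ybar) i * s i : ℝ) : EReal)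
          + ((-(∑ i, b i * y i) : ℝ) : EReal)
        ≤ ((mip (-Z') X : ℝ) : EReal) + ((∑ i, (-ybar') i * s i : ℝ) : EReal)
          + ((-(∑ i, b i * y' i) : ℝ) : EReal) := by exact_mod_cast hmid
      _ ≤ suppFn P (-Z') + suppFnVec Q (-ybar') + ((-(∑ i, b i * y' i) : ℝ) : EReal) :=
          add_le_add (add_le_add hb1 hb2) le_rfl
  · -- equality of optimal values
    rw [hsuppP, hsuppQ]
    have : mip C X + mip (-Z) X + (∑ i, (-ybar) i * s i) = ∑ i, b i * y i := by
      rw [mip_neg_left, hvs]; linarith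
    exact_mod_cast this
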